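/- Let C be the Catalan generating function over ℚ and let T₀ = C·(C ∘ (zC²)), where ∘ denotes composition of formal power series (well-defined since zC² has zero constant term). Then T₀ satisfies the functional equation T₀·(1 − z·(C + T₀)) = 1; equivalently T₀ = 1/(1 − z(C + T₀)). -/

import Mathlib

open PowerSeries Finset

/-- The Catalan generating function `C = ∑ Cₙ zⁿ` over `ℚ`. -/
noncomputable def Cgf : PowerSeries ℚ := PowerSeries.mk fun n => (catalan n : ℚ)

/-- Composition `F ∘ a` of formal power series (intended for `a` with zero constant
term, in which case only the terms with `k ≤ n` contribute to the coefficient of `zⁿ`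
in `∑ₖ ([zᵏ]F)·aᵏ`, so the finite sum below is the full composition). -/
noncomputable def PScomp (F a : PowerSeries ℚ) : PowerSeries ℚ :=
  PowerSeries.mk fun n => ∑ k ∈ Finset.range (n + 1),
    PowerSeries.coeff k F * PowerSeries.coeff n (a ^ k)

/-- `T₀ = C·(C ∘ (zC²))`, the generating function for ENT trees with mutator at the root. -/
noncomputable def T₀ : PowerSeries ℚ := Cgf * PScomp Cgf (PowerSeries.X * Cgf ^ 2)

lemma coeff_pow_zero_of_lt {a : PowerSeries ℚ} (ha : (X : PowerSeries ℚ) ∣ a)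
    {n k : ℕ} (h : n < k) : PowerSeries.coeff n (a ^ k) = 0 := by
  have hd : (X : PowerSeries ℚ) ^ k ∣ a ^ k := pow_dvd_pow_of_dvd ha k
  exact (PowerSeries.X_pow_dvd_iff.mp hd) n h

lemma coeff_PScomp (F a : PowerSeries ℚ) (n : ℕ) :
    PowerSeries.coeff n (PScomp F a) =
      ∑ k ∈ Finset.range (n + 1),
        PowerSeries.coeff k F * PowerSeries.coeff n (a ^ k) := by
  simp [PScomp]

/-- Coefficient of the "partial sum" form of the composition. -/
lemma coeff_PScomp_eq_sum (F a : PowerSeries ℚ) (ha : (X : PowerSeries ℚ) ∣ a)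
    {n N : ℕ} (hn : n < N) :
    PowerSeries.coeff n (PScomp F a) =
      ∑ k ∈ Finset.range N, PowerSeries.coeff k F * PowerSeries.coeff n (a ^ k) := by
  rw [coeff_PScomp]
  apply Finset.sum_subset (Finset.range_subset_range.2 hn)
  intro k _ hk
  have : n < k := by
    simp only [Finset.mem_range, not_lt] at hk; omega
  rw [coeff_pow_zero_of_lt ha this, mul_zero]

lemma PScomp_mul (F G a : PowerSeries ℚ) (ha : (X : PowerSeries ℚ) ∣ a) :
    PScomp (F * G) a = PScomp F a * PScomp G a := by
  ext n
  -- abbreviations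
  set s : Finset (ℕ × ℕ) := Finset.range (n + 1) ×ˢ Finset.range (n + 1) with hs
  have hT0 : ∀ p : ℕ × ℕ, ¬ p.1 + p.2 ∈ Finset.range (n + 1) →
      PowerSeries.coeff p.1 F * PowerSeries.coeff p.2 G
        * PowerSeries.coeff n (a ^ (p.1 + p.2)) = 0 := by
    intro p hp
    have : n < p.1 + p.2 := by simp only [Finset.mem_range, not_lt] at hp; omega
    rw [coeff_pow_zero_of_lt ha this, mul_zero]
  -- RHS: expand the product of the two partial sums
  have hR : PowerSeries.coeff n (PScomp F a * PScomp G a) =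
      ∑ p ∈ s, PowerSeries.coeff p.1 F * PowerSeries.coeff p.2 G
        * PowerSeries.coeff n (a ^ (p.1 + p.2)) := by
    rw [PowerSeries.coeff_mul]
    have step : ∀ q ∈ Finset.HasAntidiagonal.antidiagonal n,
        PowerSeries.coeff q.1 (PScomp F a) * PowerSeries.coeff q.2 (PScomp G a)
          = ∑ p ∈ s, (PowerSeries.coeff p.1 F * PowerSeries.coeff q.1 (a ^ p.1))
              * (PowerSeries.coeff p.2 G * PowerSeries.coeff q.2 (a ^ p.2)) := by
      intro q hq
      have hq' : q.1 + q.2 = n := Finset.HasAntidiagonal.mem_antidiagonal.mp hq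
      rw [coeff_PScomp_eq_sum F a ha (by omega : q.1 < n + 1),
        coeff_PScomp_eq_sum G a ha (by omega : q.2 < n + 1),
        Finset.sum_mul_sum]
      rw [hs, Finset.sum_product]
    rw [Finset.sum_congr rfl step, Finset.sum_comm]
    apply Finset.sum_congr rfl
    intro p _
    rw [pow_add, PowerSeries.coeff_mul, Finset.mul_sum]
    apply Finset.sum_congr rfl
    intro q _
    ring
  -- LHS: expand coeff of F*G and reindex
  have hL : PowerSeries.coeff n (PScomp (F * G) a) =
      ∑ p ∈ s, PowerSeries.coeff p.1 F * PowerSeries.coeff p.2 G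
        * PowerSeries.coeff n (a ^ (p.1 + p.2)) := by
    rw [coeff_PScomp]
    have step : ∀ k ∈ Finset.range (n + 1),
        PowerSeries.coeff k (F * G) * PowerSeries.coeff n (a ^ k)
          = ∑ p ∈ s with p.1 + p.2 = k,
              PowerSeries.coeff p.1 F * PowerSeries.coeff p.2 G
                * PowerSeries.coeff n (a ^ (p.1 + p.2)) := by
      intro k hk
      have hk' : k ≤ n := by simpa [Nat.lt_succ_iff] using hk
      have hset : Finset.HasAntidiagonal.antidiagonal k = s.filter (fun p => p.1 + p.2 = k) := by
        ext p
        simp only [Finset.HasAntidiagonal.mem_antidiagonal, Finset.mem_filter, hs, Finset.mem_product,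
          Finset.mem_range]
        constructor
        · intro h; exact ⟨⟨by omega, by omega⟩, h⟩
        · exact fun h => h.2
      rw [PowerSeries.coeff_mul, hset, Finset.sum_mul]
      apply Finset.sum_congr rfl
      intro p hp
      have : p.1 + p.2 = k := (Finset.mem_filter.mp hp).2
      rw [this]
    rw [Finset.sum_congr rfl step,
      Finset.sum_fiberwise_eq_sum_filter s (Finset.range (n + 1)) (fun p => p.1 + p.2)
        (fun p => PowerSeries.coeff p.1 F * PowerSeries.coeff p.2 G
          * PowerSeries.coeff n (a ^ (p.1 + p.2)))]
    exact Finset.sum_filter_of_ne (fun p _ h => by_contra fun hc => h (hT0 p hc))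
  rw [hL, hR]

lemma PScomp_one (a : PowerSeries ℚ) : PScomp 1 a = 1 := by
  ext n
  rw [coeff_PScomp, Finset.sum_eq_single 0]
  · simp
  · intro k _ hk
    rw [PowerSeries.coeff_one, if_neg hk]; ring
  · simp

lemma PScomp_X (a : PowerSeries ℚ) (ha : (X : PowerSeries ℚ) ∣ a) : PScomp X a = a := by
  ext n
  rw [coeff_PScomp]
  rcases Nat.eq_zero_or_pos n with h | h
  · subst h
    obtain ⟨b, rfl⟩ := ha
    simp
  · rw [Finset.sum_eq_single 1]
    · simp
    · intro k _ hk
      rw [PowerSeries.coeff_X, if_neg hk]; ring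
    · intro h'; exfalso; exact h' (by simp [Nat.lt_succ_iff]; omega)

lemma PScomp_add (F G a : PowerSeries ℚ) : PScomp (F + G) a = PScomp F a + PScomp G a := by
  ext n
  simp [coeff_PScomp, add_mul, Finset.sum_add_distrib]

/-- The Catalan generating function satisfies `C = 1 + X·C²`. -/
lemma Cgf_eq : Cgf = 1 + X * Cgf ^ 2 := by
  ext n
  rcases n with _ | n
  · simp [Cgf]
  · rw [map_add, PowerSeries.coeff_succ_X_mul, PowerSeries.coeff_one, if_neg (Nat.succ_ne_zero n)]
    rw [zero_add, pow_two, PowerSeries.coeff_mul]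
    simp only [Cgf, PowerSeries.coeff_mk]
    rw [catalan_succ' n]
    push_cast
    rfl

/-- `T₀` satisfies the functional equation `T₀·(1 − z(C + T₀)) = 1`. -/
theorem stmt7 : T₀ * (1 - PowerSeries.X * (Cgf + T₀)) = 1 := by
  set a : PowerSeries ℚ := X * Cgf ^ 2 with ha_def
  have ha : (X : PowerSeries ℚ) ∣ a := dvd_mul_right _ _
  set D : PowerSeries ℚ := PScomp Cgf a with hD_def
  have hC : Cgf = 1 + X * Cgf ^ 2 := Cgf_eq
  have hD : D = 1 + a * D ^ 2 := by
    calc D = PScomp (1 + X * Cgf ^ 2) a := by rw [hD_def, ← hC]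
    _ = PScomp 1 a + PScomp (X * (Cgf * Cgf)) a := by rw [PScomp_add, pow_two]
    _ = 1 + PScomp X a * (PScomp Cgf a * PScomp Cgf a) := by
        rw [PScomp_one, PScomp_mul _ _ _ ha, PScomp_mul _ _ _ ha]
    _ = 1 + a * D ^ 2 := by rw [PScomp_X a ha, pow_two]
  have hT : T₀ = Cgf * D := rfl
  rw [hT]
  rw [ha_def] at hD
  linear_combination D * hC + hD
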